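/- Buchberger's criterion for monoid congruences: let B = {(a_i, b_i)} be a finite set of rules in F × F with a_i ≻ b_i, generating the congruence R. Suppose that for all i, j the S-pair relation (b_i + (a_i ∨ a_j) − a_i, b_j + (a_i ∨ a_j) − a_j) can be rewritten to a trivial relation (equal components) by repeatedly applying rules of B to its terms. Then B is a Gröbner basis for R, i.e., the initial terms a_i generate the ideal in(R) of F. -/

import Mathlib

namespace BuchbergerAux

variable {n : ℕ}

/-- One rewriting step by a rule of `B`. -/
def Step (B : Finset ((Fin n → ℕ) × (Fin n → ℕ))) (x y : Fin n → ℕ) : Prop :=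
  ∃ r ∈ B, ∃ d, x = r.1 + d ∧ y = r.2 + d

theorem Step.add {B : Finset ((Fin n → ℕ) × (Fin n → ℕ))} {x y : Fin n → ℕ}
    (h : Step B x y) (e : Fin n → ℕ) : Step B (x + e) (y + e) := by
  obtain ⟨r, hr, d, hx, hy⟩ := h
  exact ⟨r, hr, d + e, by rw [hx, add_assoc], by rw [hy, add_assoc]⟩

theorem rtg_add {B : Finset ((Fin n → ℕ) × (Fin n → ℕ))} {x y : Fin n → ℕ}
    (h : Relation.ReflTransGen (Step B) x y) (e : Fin n → ℕ) :
    Relation.ReflTransGen (Step B) (x + e) (y + e) :=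
  Relation.ReflTransGen.lift (· + e) (fun _ _ h => Step.add h e) _ _ h

theorem local_confluence
    {B : Finset ((Fin n → ℕ) × (Fin n → ℕ))}
    (hSpairs : ∀ p ∈ B, ∀ q ∈ B, ∃ c : Fin n → ℕ,
      Relation.ReflTransGen (Step B) (p.2 + ((p.1 ⊔ q.1) - p.1)) c ∧
      Relation.ReflTransGen (Step B) (q.2 + ((p.1 ⊔ q.1) - q.1)) c)
    {x y z : Fin n → ℕ} (hy : Step B x y) (hz : Step B x z) :
    ∃ w, Relation.ReflTransGen (Step B) y w ∧ Relation.ReflTransGen (Step B) z w := by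
  obtain ⟨p, hp, d1, hx1, hy1⟩ := hy
  obtain ⟨q, hq, d2, hx2, hz2⟩ := hz
  have hple : p.1 ≤ x := hx1 ▸ le_add_of_nonneg_right (by positivity)
  have hqle : q.1 ≤ x := hx2 ▸ le_add_of_nonneg_right (by positivity)
  have hsle : p.1 ⊔ q.1 ≤ x := sup_le hple hqle
  set e := x - (p.1 ⊔ q.1) with he
  have hxe : (p.1 ⊔ q.1) + e = x := add_tsub_cancel_of_le hsle
  have hd1 : d1 = ((p.1 ⊔ q.1) - p.1) + e := by
    have : p.1 + d1 = p.1 + (((p.1 ⊔ q.1) - p.1) + e) := by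
      rw [← hx1, ← add_assoc, add_tsub_cancel_of_le le_sup_left, hxe]
    exact add_left_cancel this
  have hd2 : d2 = ((p.1 ⊔ q.1) - q.1) + e := by
    have : q.1 + d2 = q.1 + (((p.1 ⊔ q.1) - q.1) + e) := by
      rw [← hx2, ← add_assoc, add_tsub_cancel_of_le le_sup_right, hxe]
    exact add_left_cancel this
  obtain ⟨c, hc1, hc2⟩ := hSpairs p hp q hq
  refine ⟨c + e, ?_, ?_⟩
  · have := rtg_add hc1 e
    rwa [hy1, hd1, ← add_assoc]
  · have := rtg_add hc2 e
    rwa [hz2, hd2, ← add_assoc]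

theorem confluence
    {lt : (Fin n → ℕ) → (Fin n → ℕ) → Prop} (hwf : WellFounded lt)
    {B : Finset ((Fin n → ℕ) × (Fin n → ℕ))}
    (hlt : ∀ x y, Step B x y → lt y x)
    (hloc : ∀ {x y z : Fin n → ℕ}, Step B x y → Step B x z →
      ∃ w, Relation.ReflTransGen (Step B) y w ∧ Relation.ReflTransGen (Step B) z w)
    (x : Fin n → ℕ) :
    ∀ y z, Relation.ReflTransGen (Step B) x y → Relation.ReflTransGen (Step B) x z →
      ∃ w, Relation.ReflTransGen (Step B) y w ∧ Relation.ReflTransGen (Step B) z w := by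
  induction x using WellFounded.induction hwf with
  | _ x ih =>
    intro y z hxy hxz
    rcases hxy.cases_head with rfl | ⟨y1, hx1, h1y⟩
    · exact ⟨z, hxz, Relation.ReflTransGen.refl⟩
    rcases hxz.cases_head with rfl | ⟨z1, hx2, h2z⟩
    · exact ⟨y, Relation.ReflTransGen.refl, hxy⟩
    obtain ⟨w, hw1, hw2⟩ := hloc hx1 hx2
    obtain ⟨u, hu1, hu2⟩ := ih y1 (hlt _ _ hx1) y w h1y hw1
    obtain ⟨v, hv1, hv2⟩ := ih z1 (hlt _ _ hx2) z u h2z (hw2.trans hu2)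
    exact ⟨v, hu1.trans hv2, hv1⟩

end BuchbergerAux

/-- Buchberger's criterion for monoid congruences: Let `B` be a finite set
of rules `(aᵢ, bᵢ)` in `ℕⁿ × ℕⁿ` with `aᵢ ≻ bᵢ`, and let `R` be the congruence it
generates.  Suppose every S-pair relation
`(bᵢ + (aᵢ ∨ aⱼ) − aᵢ, bⱼ + (aᵢ ∨ aⱼ) − aⱼ)` (where `∨` is the coordinatewise max) can be
rewritten to a trivial relation by repeatedly applying rules of `B` to its terms.  Then
`B` is a Gröbner basis for `R`: the initial terms `aᵢ` generate the ideal `in(R)`. -/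
theorem buchberger_criterion (n : ℕ)
    (lt : (Fin n → ℕ) → (Fin n → ℕ) → Prop)
    (hwo : IsWellOrder (Fin n → ℕ) lt)
    (hmon : ∀ a b c : Fin n → ℕ, lt a b → lt (a + c) (b + c))
    (B : Finset ((Fin n → ℕ) × (Fin n → ℕ)))
    (hB : ∀ p ∈ B, lt p.2 p.1)
    (hSpairs : ∀ p ∈ B, ∀ q ∈ B, ∃ c : Fin n → ℕ,
      Relation.ReflTransGen
        (fun x y : Fin n → ℕ => ∃ r ∈ B, ∃ d, x = r.1 + d ∧ y = r.2 + d)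
        (p.2 + ((p.1 ⊔ q.1) - p.1)) c ∧
      Relation.ReflTransGen
        (fun x y : Fin n → ℕ => ∃ r ∈ B, ∃ d, x = r.1 + d ∧ y = r.2 + d)
        (q.2 + ((p.1 ⊔ q.1) - q.1)) c) :
    ∀ x : Fin n → ℕ,
      (∃ b, lt b x ∧ addConGen (fun u v : Fin n → ℕ => (u, v) ∈ B) x b) →
      ∃ p ∈ B, ∃ f, x = p.1 + f := by
  open BuchbergerAux in
  intro x ⟨b, hbx, hR⟩
  have hwf : WellFounded lt := hwo.wf
  have hlt : ∀ x y, Step B x y → lt y x := by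
    rintro x y ⟨r, hr, d, rfl, rfl⟩
    exact hmon _ _ _ (hB r hr)
  have hloc : ∀ {x y z : Fin n → ℕ}, Step B x y → Step B x z →
      ∃ w, Relation.ReflTransGen (Step B) y w ∧ Relation.ReflTransGen (Step B) z w :=
    fun hy hz => local_confluence hSpairs hy hz
  have hconf := confluence hwf hlt hloc
  -- joinability is an additive congruence
  let J : AddCon (Fin n → ℕ) :=
    { r := fun u v => ∃ w, Relation.ReflTransGen (Step B) u w ∧
        Relation.ReflTransGen (Step B) v w
      iseqv :=
        ⟨fun u => ⟨u, .refl, .refl⟩,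
         fun ⟨w, h1, h2⟩ => ⟨w, h2, h1⟩,
         fun {a b c} ⟨w1, ha, hb1⟩ ⟨w2, hb2, hc⟩ => by
           obtain ⟨u, hu1, hu2⟩ := hconf b w1 w2 hb1 hb2
           exact ⟨u, ha.trans hu1, hc.trans hu2⟩⟩
      add' := by
        rintro a b c d ⟨w1, ha, hb⟩ ⟨w2, hc, hd⟩
        refine ⟨w1 + w2, ?_, ?_⟩
        · have h1 := rtg_add ha c
          have h2 := rtg_add hc w1
          rw [add_comm c w1, add_comm w2 w1] at h2
          exact h1.trans h2
        · have h1 := rtg_add hb d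
          have h2 := rtg_add hd w1
          rw [add_comm d w1, add_comm w2 w1] at h2
          exact h1.trans h2 }
  have hle : addConGen (fun u v : Fin n → ℕ => (u, v) ∈ B) ≤ J :=
    AddCon.addConGen_le.mpr (fun u v huv =>
      ⟨v, Relation.ReflTransGen.single
        ⟨(u, v), huv, 0, (add_zero u).symm, (add_zero v).symm⟩,
        Relation.ReflTransGen.refl⟩)
  obtain ⟨c, hxc, hbc⟩ := hle hR
  by_contra hno
  push_neg at hno
  have hceq : c = x := by
    rcases hxc.cases_head with h | ⟨y, hy, _⟩
    · exact h.symm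
    · obtain ⟨r, hr, d, hxd, _⟩ := hy
      exact absurd hxd (hno r hr d)
  rw [hceq] at hbc
  have hdec : ∀ u v, Relation.ReflTransGen (Step B) u v → v = u ∨ lt v u := by
    intro u v h
    induction h with
    | refl => exact Or.inl rfl
    | tail _ h2 ih =>
      right
      have hstep := hlt _ _ h2
      rcases ih with rfl | hmid
      · exact hstep
      · exact @IsTrans.trans _ lt (by haveI := hwo; infer_instance) _ _ _ hstep hmid
  rcases hdec b x hbc with rfl | hxb
  · exact hwo.wf.asymmetric _ _ hbx hbx
  · exact hwo.wf.asymmetric _ _ hbx hxb
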